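/- Fix d > 0, ε ∈ (0,1], and k ≥ 2. Let b ∈ {−1,1}^{2k} be the alternating sign vector b_ℓ = (−1)^ℓ indexed around a cycle of length 2k, pairing entries as (w_i·γ_i, w_i·γ_{i+1}) for i = 1,…,k with indices mod k. Then inf over w ∈ ℝ₊^k, γ ∈ ℝ₊^k of (1/2)·∑_{i=1}^k ( |w_i·γ_i − (1+ε)/d| + |w_i·γ_{i+1} − (1−ε)/d| ) ≥ ε/(2d). -/

import Mathlib

/-- Quantitative single-cycle separation: the ℓ¹ projection error onto rank-one
products around a cycle with alternating perturbation targets is at least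
`ε/(2d)`. -/
theorem single_cycle_separation (k : ℕ) (hk : 2 ≤ k) (d : ℝ) (hd : 0 < d)
    (ε : ℝ) (hε : ε ∈ Set.Ioc (0:ℝ) 1)
    (w γ : Fin k → ℝ) (hw : ∀ i, 0 ≤ w i) (hγ : ∀ i, 0 ≤ γ i) :
    ε / (2 * d) ≤
      (1/2) * ∑ i : Fin k,
        (|w i * γ i - (1 + ε)/d| + |w i * γ (i + ⟨1, by omega⟩) - (1 - ε)/d|) := by
  obtain ⟨hε0, hε1⟩ := hε
  by_contra h
  push_neg at h
  have hsum : ∑ i : Fin k,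
      (|w i * γ i - (1 + ε)/d| + |w i * γ (i + ⟨1, by omega⟩) - (1 - ε)/d|) < ε / d := by
    have : ε / (2 * d) = (1/2) * (ε / d) := by ring
    rw [this] at h
    linarith
  have key : ∀ i : Fin k, γ (i + ⟨1, by omega⟩) < γ i := by
    intro i
    have hterm : |w i * γ i - (1 + ε)/d| + |w i * γ (i + ⟨1, by omega⟩) - (1 - ε)/d| < ε / d := by
      have hle := Finset.single_le_sum
        (f := fun j : Fin k => |w j * γ j - (1 + ε)/d| + |w j * γ (j + ⟨1, by omega⟩) - (1 - ε)/d|)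
        (fun j _ => by positivity) (Finset.mem_univ i)
      exact lt_of_le_of_lt hle hsum
    have h1 : |w i * γ i - (1 + ε)/d| < ε / d :=
      lt_of_le_of_lt (le_add_of_nonneg_right (abs_nonneg _)) hterm
    have h2 : |w i * γ (i + ⟨1, by omega⟩) - (1 - ε)/d| < ε / d :=
      lt_of_le_of_lt (le_add_of_nonneg_left (abs_nonneg _)) hterm
    rw [abs_lt] at h1 h2
    have e1 : (1 + ε)/d - ε/d = 1/d := by rw [div_sub_div_same]; ring_nf
    have e2 : (1 - ε)/d + ε/d = 1/d := by rw [← add_div]; ring_nf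
    have hx : 1/d < w i * γ i := by linarith [h1.1]
    have hy : w i * γ (i + ⟨1, by omega⟩) < 1/d := by linarith [h2.2]
    have hwpos : 0 < w i := by
      rcases (hw i).lt_or_eq with hp | hp
      · exact hp
      · exfalso
        rw [← hp, zero_mul] at hx
        have : (0:ℝ) < 1/d := by positivity
        linarith
    exact lt_of_mul_lt_mul_left (by linarith) hwpos.le
  set F : ℕ → ℝ := fun n => γ ⟨n % k, Nat.mod_lt _ (by omega)⟩ with hF
  have hstep : ∀ n, F (n + 1) < F n := by
    intro n
    have := key ⟨n % k, Nat.mod_lt _ (by omega)⟩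
    have hidx : (⟨n % k, Nat.mod_lt _ (by omega)⟩ + ⟨1, by omega⟩ : Fin k)
        = ⟨(n + 1) % k, Nat.mod_lt _ (by omega)⟩ := by
      apply Fin.ext
      simp [Fin.add_def, Nat.mod_add_mod]
    rw [hidx] at this
    exact this
  have hanti : StrictAnti F := strictAnti_nat_of_succ_lt hstep
  have hlt : F k < F 0 := hanti (by omega)
  have heq : F k = F 0 := by simp [hF]
  linarith
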